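/- Let M be a stochastic matrix on a countable space S with invariant probability measure π, and suppose there is a finite set S₁ ⊆ S, a time s and α' > 0 with M^s(x,x') ≥ α' for all x ∈ S and x' ∈ S₁, and π(x') ≥ α' for all x' ∈ S₁. Then for every x ∈ S, the total variation distance satisfies ‖M^s(x,·) − π‖_TV ≤ 1 − (α')²·|S₁|. -/

import Mathlib

-- n-step transition probabilities of a kernel on a countable space.
open Classical in
noncomputable def mpow {S : Type*} (M : S → S → ℝ) : ℕ → S → S → ℝ
  | 0 => fun x y => if x = y then 1 else 0
  | (n + 1) => fun x y => ∑' z, mpow M n x z * M z y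

lemma mpow_nonneg {S : Type*} (M : S → S → ℝ) (hMpos : ∀ x y, 0 ≤ M x y) :
    ∀ n x y, 0 ≤ mpow M n x y := by
  intro n
  induction n with
  | zero => intro x y; simp only [mpow]; split <;> norm_num
  | succ n ih =>
    intro x y
    exact tsum_nonneg fun z => mul_nonneg (ih x z) (hMpos z y)

lemma mpow_row {S : Type*} [Countable S] (M : S → S → ℝ) (hMpos : ∀ x y, 0 ≤ M x y)
    (hMrow : ∀ x, ∑' y, M x y = 1) :
    ∀ n x, Summable (mpow M n x) ∧ ∑' y, mpow M n x y = 1 := by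
  intro n
  induction n with
  | zero =>
    intro x
    constructor
    · apply summable_of_ne_finset_zero (s := {x})
      intro y hy
      simp only [mpow]
      rw [if_neg]
      intro h; exact hy (by simp [h])
    · simp only [mpow]
      rw [tsum_eq_single x (fun y hy => if_neg (fun h => hy h.symm))]
      simp
  | succ n ih =>
    intro x
    obtain ⟨hsumm, hsum1⟩ := ih x
    have hMsum : ∀ z, Summable (M z) := fun z => by
      by_contra h
      have := hMrow z
      rw [tsum_eq_zero_of_not_summable h] at this
      exact one_ne_zero this.symm
    have hMle1 : ∀ z y, M z y ≤ 1 := fun z y => by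
      rw [← hMrow z]; exact Summable.le_tsum (hMsum z) y fun b _ => hMpos z b
    set f : S → S → ℝ := fun z y => mpow M n x z * M z y with hf
    have hfnn : ∀ z y, 0 ≤ f z y := fun z y => mul_nonneg (mpow_nonneg M hMpos n x z) (hMpos z y)
    have hrow : ∀ z, Summable (f z) := fun z => (hMsum z).mul_left _
    have hrowsum : ∀ z, ∑' y, f z y = mpow M n x z := fun z => by
      rw [hf]; simp only []; rw [tsum_mul_left, hMrow z, mul_one]
    have huncurry : Summable fun p : S × S => f p.1 p.2 := by
      rw [summable_prod_of_nonneg (fun p => hfnn p.1 p.2)]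
      refine ⟨hrow, ?_⟩
      simp only [hrowsum]
      exact hsumm
    have hcol : ∀ y, Summable fun z => f z y := fun y =>
      Summable.of_nonneg_of_le (fun z => hfnn z y)
        (fun z => by
          have := mul_le_mul_of_nonneg_left (hMle1 z y) (mpow_nonneg M hMpos n x z)
          simpa using this) hsumm
    have hswap : ∑' y, ∑' z, f z y = ∑' z, ∑' y, f z y :=
      Summable.tsum_comm' huncurry hrow hcol
    have hmp : (mpow M (n+1) x) = fun y => ∑' z, f z y := rfl
    constructor
    · rw [hmp]
      have : Summable fun p : S × S => f p.2 p.1 := (Equiv.prodComm S S).summable_iff.mpr huncurry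
      rw [summable_prod_of_nonneg (fun p => hfnn p.2 p.1)] at this
      exact this.2
    · rw [hmp, hswap]
      simp only [hrowsum]
      exact hsum1

set_option maxHeartbeats 1000000 in
lemma key_bound {S : Type*} [Countable S] (f g : S → ℝ)
    (hfnn : ∀ y, 0 ≤ f y) (hgnn : ∀ y, 0 ≤ g y)
    (hfs : Summable f) (hgs : Summable g)
    (hf1 : ∑' y, f y = 1) (hg1 : ∑' y, g y = 1)
    (c : ℝ) (hc : 0 ≤ c) (hcle : c ≤ ∑' y, min (f y) (g y)) (A : Set S) :
    ∑' y : A, (f y - g y) ≤ 1 - c := by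
  have hmnn : ∀ y, 0 ≤ min (f y) (g y) := fun y => le_min (hfnn y) (hgnn y)
  have hms : Summable fun y => min (f y) (g y) :=
    hfs.of_nonneg_of_le hmnn (fun y => min_le_left _ _)
  have h1 : ∑' y : A, (f y - g y) ≤ ∑' y : A, (f y - min (f y) (g y)) :=
    Summable.tsum_le_tsum (fun y => by have := min_le_right (f y.1) (g y.1); linarith)
      ((hfs.subtype A).sub (hgs.subtype A)) ((hfs.subtype A).sub (hms.subtype A))
  have h2 : ∑' y : A, (f y - min (f y) (g y)) ≤ ∑' y, (f y - min (f y) (g y)) := by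
    apply Summable.tsum_le_tsum_of_inj (f := fun y : A => f y - min (f y) (g y)) (Subtype.val : A → S) Subtype.val_injective
      (fun y _ => by have := min_le_left (f y) (g y); linarith)
      (fun y => le_refl _) ((hfs.subtype A).sub (hms.subtype A)) (hfs.sub hms)
  have h3 : ∑' y, (f y - min (f y) (g y)) = 1 - ∑' y, min (f y) (g y) := by
    rw [Summable.tsum_sub hfs hms, hf1]
  linarith

/-- If `M^s(x,x') ≥ α'` for all `x` and all `x' ∈ S₁`, and `π(x') ≥ α'` on `S₁`, then
`‖M^s(x,·) − π‖_TV ≤ 1 − (α')² |S₁|`, where the total variation distance is the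
supremum over events `A` of the difference of probabilities. -/
theorem stmt3 {S : Type*} [Countable S]
    (M : S → S → ℝ) (hMpos : ∀ x y, 0 ≤ M x y) (hMrow : ∀ x, ∑' y, M x y = 1)
    (π : S → ℝ) (hπpos : ∀ x, 0 ≤ π x) (hπ1 : ∑' x, π x = 1)
    (hπinv : ∀ y, ∑' x, π x * M x y = π y)
    (S₁ : Finset S) (s : ℕ) (α' : ℝ) (hα' : 0 < α')
    (hcomm : ∀ x : S, ∀ x' ∈ S₁, α' ≤ mpow M s x x')
    (hπS₁ : ∀ x' ∈ S₁, α' ≤ π x') :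
    ∀ x : S, ∀ A : Set S,
      |∑' y : A, (mpow M s x y - π y)| ≤ 1 - α' ^ 2 * S₁.card := by
  intro x A
  set f : S → ℝ := mpow M s x with hfdef
  have hfnn : ∀ y, 0 ≤ f y := fun y => mpow_nonneg M hMpos s x y
  obtain ⟨hfs, hf1⟩ := mpow_row M hMpos hMrow s x
  have hgs : Summable π := by
    by_contra h
    rw [tsum_eq_zero_of_not_summable h] at hπ1
    exact one_ne_zero hπ1.symm
  have hmnn : ∀ y, 0 ≤ min (f y) (π y) := fun y => le_min (hfnn y) (hπpos y)
  have hms : Summable fun y => min (f y) (π y) :=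
    hfs.of_nonneg_of_le hmnn (fun y => min_le_left _ _)
  have hc : α' ^ 2 * S₁.card ≤ ∑' y, min (f y) (π y) := by
    calc α' ^ 2 * S₁.card = ∑ y ∈ S₁, α' ^ 2 := by
          rw [Finset.sum_const, nsmul_eq_mul, mul_comm]
      _ ≤ ∑ y ∈ S₁, min (f y) (π y) := by
          apply Finset.sum_le_sum
          intro y hy
          have h1 : α' ≤ 1 := le_trans (hπS₁ y hy)
            (Summable.le_tsum hgs y fun b _ => hπpos b) |>.trans_eq hπ1
          have h2 := hcomm x y hy
          have h3 := hπS₁ y hy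
          have : α' ^ 2 ≤ α' := by nlinarith
          exact le_trans this (le_min h2 h3)
      _ ≤ ∑' y, min (f y) (π y) := Summable.sum_le_tsum S₁ (fun y _ => hmnn y) hms
  have hcnn : (0:ℝ) ≤ α' ^ 2 * S₁.card := by positivity
  have hb := key_bound f π hfnn hπpos hfs hgs hf1 hπ1 _ hcnn hc
  rw [abs_le]
  refine ⟨?_, hb A⟩
  have hbc := hb Aᶜ
  have hsplit : ∑' y : A, (f y - π y) + ∑' y : ↥Aᶜ, (f y - π y) = 0 := by
    rw [Summable.tsum_add_tsum_compl ((hfs.sub hgs).subtype A) ((hfs.sub hgs).subtype Aᶜ),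
      Summable.tsum_sub hfs hgs, hf1, hπ1]
    ring
  linarith
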